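/- Let ω ∈ ℝ, μ₀ ∈ ℝ, and let F : ℝ × ℝ⁴ → ℝ⁴, (μ, z) ↦ F_μ(z), be differentiable jointly in (μ, z), and K : ℝ × ℝ → ℝ⁴ with μ ↦ K_μ(θ) differentiable and F_μ(K_μ(θ)) = K_μ(θ+ω) for all μ near μ₀ and all θ. Suppose P : ℝ → (4×4 real matrices) takes invertible values and Λ : ℝ → (4×4 real matrices) satisfies the bundle equation D_zF_{μ₀}(K_{μ₀}(θ)) · P(θ) = P(θ+ω) · Λ(θ) for all θ. Define ξ(θ) := P(θ)⁻¹ · (dK_μ/dμ)|_{μ₀}(θ). Then for all θ ∈ ℝ: Λ(θ)·ξ(θ) − ξ(θ+ω) = −P(θ+ω)⁻¹ · (dF_μ/dμ)|_{μ₀}(K_{μ₀}(θ)). -/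

import Mathlib

open Real Matrix

/-- Eq. (17) of the paper, the cohomological equation for the
Lindstedt predictor. If `F_μ(K_μ(θ)) = K_μ(θ+ω)` for all `μ` near `μ₀`, the bundle
equation `D_zF_{μ₀}(K_{μ₀}(θ))P(θ) = P(θ+ω)Λ(θ)` holds with `P(θ)` invertible, and
`ξ(θ) = P(θ)⁻¹·(dK_μ/dμ)|_{μ₀}(θ)`, then
`Λ(θ)ξ(θ) − ξ(θ+ω) = −P(θ+ω)⁻¹·(dF_μ/dμ)|_{μ₀}(K_{μ₀}(θ))`. -/
theorem lindstedt_cohomological_equation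
    (ω μ₀ ε : ℝ) (hε : 0 < ε)
    (F : ℝ → (Fin 4 → ℝ) → (Fin 4 → ℝ))
    (hF : Differentiable ℝ (fun p : ℝ × (Fin 4 → ℝ) => F p.1 p.2))
    (K : ℝ → ℝ → (Fin 4 → ℝ))
    (hK : ∀ θ : ℝ, Differentiable ℝ (fun μ => K μ θ))
    (hinv : ∀ μ ∈ Set.Ioo (μ₀ - ε) (μ₀ + ε), ∀ θ : ℝ, F μ (K μ θ) = K μ (θ + ω))
    (DF : (Fin 4 → ℝ) → Matrix (Fin 4) (Fin 4) ℝ)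
    (hDF : ∀ z, HasFDerivAt (F μ₀) ((Matrix.mulVecLin (DF z)).toContinuousLinearMap) z)
    (P Λ : ℝ → Matrix (Fin 4) (Fin 4) ℝ)
    (hPunit : ∀ θ : ℝ, IsUnit (P θ))
    (hbundle : ∀ θ : ℝ, DF (K μ₀ θ) * P θ = P (θ + ω) * Λ θ)
    (ξ : ℝ → (Fin 4 → ℝ))
    (hξ : ∀ θ : ℝ, ξ θ = (P θ)⁻¹ *ᵥ deriv (fun s => K s θ) μ₀) :
    ∀ θ : ℝ,
      Λ θ *ᵥ ξ θ - ξ (θ + ω)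
        = -((P (θ + ω))⁻¹ *ᵥ deriv (fun s => F s (K μ₀ θ)) μ₀) := by
  intro θ
  set z0 := K μ₀ θ with hz0
  have hμmem : Set.Ioo (μ₀ - ε) (μ₀ + ε) ∈ nhds μ₀ :=
    Ioo_mem_nhds (by linarith) (by linarith)
  set a := deriv (fun s => K s θ) μ₀ with ha_def
  have ha : HasDerivAt (fun s => K s θ) a μ₀ := ((hK θ) μ₀).hasDerivAt
  set L := fderiv ℝ (fun p : ℝ × (Fin 4 → ℝ) => F p.1 p.2) (μ₀, z0) with hL_def
  have hL : HasFDerivAt (fun p : ℝ × (Fin 4 → ℝ) => F p.1 p.2) L (μ₀, z0) :=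
    (hF (μ₀, z0)).hasFDerivAt
  have hpair : HasDerivAt (fun μ : ℝ => (μ, K μ θ)) ((1 : ℝ), a) μ₀ :=
    HasDerivAt.prodMk (hasDerivAt_id μ₀) ha
  have hg : HasDerivAt (fun μ => F μ (K μ θ)) (L (1, a)) μ₀ :=
    by have := hL.comp_hasDerivAt μ₀ hpair; exact this
  have hc : HasDerivAt (fun s => F s z0) (L (1, 0)) μ₀ :=
    by have := hL.comp_hasDerivAt μ₀ (HasDerivAt.prodMk (hasDerivAt_id μ₀) (hasDerivAt_const μ₀ z0)); exact this
  -- identify DF z0 with the partial derivative in z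
  have hT : HasFDerivAt (fun z : Fin 4 → ℝ => (μ₀, z))
      (ContinuousLinearMap.inr ℝ ℝ (Fin 4 → ℝ)) z0 :=
    (HasFDerivAt.prodMk (hasFDerivAt_const μ₀ z0) (hasFDerivAt_id z0))
  have hcomp : HasFDerivAt (F μ₀)
      (L.comp (ContinuousLinearMap.inr ℝ ℝ (Fin 4 → ℝ))) z0 := hL.comp z0 hT
  have hA : ∀ v : Fin 4 → ℝ, DF z0 *ᵥ v = L (0, v) := by
    intro v
    have := (hDF z0).unique hcomp
    have := congrFun (congrArg (fun (T : (Fin 4 → ℝ) →L[ℝ] (Fin 4 → ℝ)) => (T : (Fin 4 → ℝ) → (Fin 4 → ℝ))) this) v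
    simpa using this
  -- K μ (θ+ω) agrees with F μ (K μ θ) near μ₀
  have heq : (fun μ => K μ (θ + ω)) =ᶠ[nhds μ₀] (fun μ => F μ (K μ θ)) :=
    Filter.eventuallyEq_of_mem hμmem (fun μ hμ => (hinv μ hμ θ).symm)
  have hb : HasDerivAt (fun μ => K μ (θ + ω)) (L (1, a)) μ₀ :=
    hg.congr_of_eventuallyEq heq
  have hbval : deriv (fun s => K s (θ + ω)) μ₀ = L (1, a) := hb.deriv
  have hcval : deriv (fun s => F s z0) μ₀ = L (1, 0) := hc.deriv
  have hsplit : L (1, a) = L (1, 0) + L (0, a) := by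
    rw [← map_add]; norm_num
  -- invert the bundle equation
  have hdet : IsUnit (P (θ + ω)).det :=
    (Matrix.isUnit_iff_isUnit_det _).mp (hPunit (θ + ω))
  have hdetθ : IsUnit (P θ).det :=
    (Matrix.isUnit_iff_isUnit_det _).mp (hPunit θ)
  have hΛ : Λ θ = (P (θ + ω))⁻¹ * (DF z0 * P θ) := by
    rw [hbundle θ, ← Matrix.mul_assoc, Matrix.nonsing_inv_mul _ hdet, Matrix.one_mul]
  -- final computation
  rw [hξ θ, hξ (θ + ω), hbval, hcval, hΛ, ← ha_def]
  rw [Matrix.mulVec_mulVec, Matrix.mul_assoc, Matrix.mul_assoc,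
    Matrix.mul_nonsing_inv _ hdetθ, Matrix.mul_one, ← Matrix.mulVec_mulVec]
  rw [hA a, ← Matrix.mulVec_sub, ← Matrix.mulVec_neg, hsplit]
  abel_nf
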